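/- For ρ ∈ (0,1) and positive integers T₀, T, the pre-post variance ratio g(T) = (1/T + ρ(T-1)/T)·(1 − λ(T)²), with λ(T) = 1/(√(1+(1-ρ)/(ρT₀))·√(1+(1-ρ)/(ρT))), converges as T → ∞ to ρ·(1 − 1/(1+(1-ρ)/(ρT₀))) = ρ(1-ρ)/(ρT₀ + 1 - ρ), which is strictly positive. -/
import Mathlib

open Filter

theorem stmt_12 (ρ : ℝ) (hρ0 : 0 < ρ) (hρ1 : ρ < 1) (T₀ : ℕ) (hT₀ : 1 ≤ T₀) :
    Filter.Tendsto
      (fun T : ℕ => (1 / (T : ℝ) + ρ * (T - 1) / T) *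
        (1 - (1 / (Real.sqrt (1 + (1 - ρ) / (ρ * T₀)) * Real.sqrt (1 + (1 - ρ) / (ρ * T)))) ^ 2))
      Filter.atTop (nhds (ρ * (1 - ρ) / (ρ * T₀ + 1 - ρ))) ∧
    ρ * (1 - 1 / (1 + (1 - ρ) / (ρ * T₀))) = ρ * (1 - ρ) / (ρ * T₀ + 1 - ρ) ∧
    0 < ρ * (1 - ρ) / (ρ * T₀ + 1 - ρ) := by
  have hT₀' : (0:ℝ) < T₀ := by exact_mod_cast hT₀
  have h1ρ : (0:ℝ) < 1 - ρ := by linarith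
  have hc0 : 0 < (1 - ρ) / (ρ * T₀) := by positivity
  have hden : 0 < ρ * T₀ + 1 - ρ := by nlinarith
  have ha : (0:ℝ) < 1 + (1 - ρ) / (ρ * T₀) := by linarith
  have heq : ρ * (1 - 1 / (1 + (1 - ρ) / (ρ * T₀))) = ρ * (1 - ρ) / (ρ * T₀ + 1 - ρ) := by
    field_simp
    ring
  refine ⟨?_, heq, by positivity⟩
  set c := (1 - ρ) / (ρ * T₀) with hc
  have hu : Tendsto (fun T : ℕ => 1 / (T : ℝ)) atTop (nhds 0) :=
    tendsto_one_div_atTop_nhds_zero_nat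
  have h1 : Tendsto (fun T : ℕ => 1 / (T : ℝ) + ρ * (1 - 1 / (T : ℝ))) atTop (nhds ρ) := by
    have := hu.add (((tendsto_const_nhds (x := (1:ℝ))).sub hu).const_mul ρ)
    simpa using this
  have hb : Tendsto (fun T : ℕ => (1 + c) * (1 + (1 - ρ) / ρ * (1 / (T : ℝ)))) atTop
      (nhds ((1 + c) * 1)) := by
    have h : Tendsto (fun T : ℕ => 1 + (1 - ρ) / ρ * (1 / (T : ℝ))) atTop
        (nhds (1 + (1 - ρ) / ρ * 0)) := tendsto_const_nhds.add (hu.const_mul _)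
    simpa using h.const_mul (1 + c)
  have hne : (1 + c) * 1 ≠ 0 := by positivity
  have h2 : Tendsto (fun T : ℕ => 1 - 1 / ((1 + c) * (1 + (1 - ρ) / ρ * (1 / (T : ℝ)))))
      atTop (nhds (1 - 1 / ((1 + c) * 1))) :=
    tendsto_const_nhds.sub (tendsto_const_nhds.div hb hne)
  have hmul := h1.mul h2
  have hval : ρ * (1 - 1 / ((1 + c) * 1)) = ρ * (1 - ρ) / (ρ * T₀ + 1 - ρ) := by
    rw [mul_one]; exact heq
  rw [hval] at hmul
  refine hmul.congr' ?_
  filter_upwards [eventually_ge_atTop 1] with T hT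
  have hx : (0:ℝ) < T := by exact_mod_cast hT
  have hbpos : (0:ℝ) < 1 + (1 - ρ) / (ρ * T) := by positivity
  have hsq : (Real.sqrt (1 + (1 - ρ) / (ρ * T₀)) * Real.sqrt (1 + (1 - ρ) / (ρ * T))) ^ 2
      = (1 + (1 - ρ) / (ρ * T₀)) * (1 + (1 - ρ) / (ρ * T)) := by
    rw [mul_pow, Real.sq_sqrt ha.le, Real.sq_sqrt hbpos.le]
  rw [div_pow, one_pow, hsq, hc]
  have hane : ρ * (T:ℝ) ≠ 0 := by positivity
  field_simp
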